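/- Let 𝒟 be a nontrivial symmetric (v,k,λ) design admitting a flag-transitive group of automorphisms G, and let α be a point of 𝒟. Then λ·|G| < |G_α|³, and in particular |G| ≤ |G_α|³. Moreover, if G is a finite almost simple group with socle X and H = G_α is a maximal subgroup of G not containing X, then |X| < |Out(X)|²·|H ∩ X|³. -/

import Mathlib

/-- A symmetric `(v, k, λ)` design: a finite set of `v` points together with a family of
`v` blocks, each block a `k`-element subset of the points, such that every point lies in
exactly `k` blocks and any two distinct points lie in exactly `λ` common blocks. -/
structure SymmetricDesign (P : Type) [Fintype P] [DecidableEq P] (v k lam : ℕ) where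
  blocks : Finset (Finset P)
  card_points : Fintype.card P = v
  card_blocks : blocks.card = v
  block_size : ∀ b ∈ blocks, b.card = k
  point_count : ∀ p : P, (blocks.filter fun b => p ∈ b).card = k
  pair_count : ∀ p q : P, p ≠ q →
    (blocks.filter fun b => p ∈ b ∧ q ∈ b).card = lam

/-- `G` is a group of automorphisms of the design `D`: every element of `G` maps blocks
to blocks. -/
def IsAutGroup {P : Type} [Fintype P] [DecidableEq P] {v k lam : ℕ}
    (D : SymmetricDesign P v k lam) (G : Subgroup (Equiv.Perm P)) : Prop :=
  ∀ g ∈ G, ∀ b ∈ D.blocks, b.image (g : P → P) ∈ D.blocks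

/-- `G` is flag-transitive on `D`: it acts transitively on incident point-block pairs. -/
def FlagTransitive {P : Type} [Fintype P] [DecidableEq P] {v k lam : ℕ}
    (D : SymmetricDesign P v k lam) (G : Subgroup (Equiv.Perm P)) : Prop :=
  ∀ p₁ p₂ : P, ∀ b₁ b₂ : Finset P, b₁ ∈ D.blocks → b₂ ∈ D.blocks →
    p₁ ∈ b₁ → p₂ ∈ b₂ → ∃ g ∈ G, g p₁ = p₂ ∧ b₁.image (g : P → P) = b₂

/-- The order of the outer automorphism group `Out(X) = Aut(X)/Inn(X)` of a group `X`. -/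
noncomputable def outCard (X : Type*) [Group X] : ℕ :=
  Nat.card (MulAut X ⧸ (MulAut.conj : X →* MulAut X).range)

/-- Corollary 2.7 of the paper: for a nontrivial flag-transitive symmetric `(v,k,λ)`
design with automorphism group `G` and point stabiliser `G_α` one has
`λ·|G| < |G_α|³`, in particular `|G| ≤ |G_α|³`; moreover, if `G` is almost simple with
socle `X` and `H = G_α` is maximal in `G` not containing `X`, then
`|X| < |Out(X)|²·|H ∩ X|³`. -/
theorem symmetricDesign_flagTransitive_large_stabilizer
    {P : Type} [Fintype P] [DecidableEq P] {v k lam : ℕ}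
    (D : SymmetricDesign P v k lam) (hnt : 2 < k ∧ k < v - 1)
    (G : Subgroup (Equiv.Perm P)) (hAut : IsAutGroup D G)
    (hFlag : FlagTransitive D G) (α : P) :
    (lam * Nat.card G < Nat.card (MulAction.stabilizer G α) ^ 3 ∧
      Nat.card G ≤ Nat.card (MulAction.stabilizer G α) ^ 3) ∧
    (∀ X : Subgroup G, X.Normal → IsSimpleGroup X →
      (∃ a b : X, a * b ≠ b * a) →
      Subgroup.centralizer (X : Set G) = ⊥ →
      IsCoatom (MulAction.stabilizer G α) → ¬ X ≤ MulAction.stabilizer G α →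
      Nat.card X <
        outCard X ^ 2 * Nat.card (MulAction.stabilizer G α ⊓ X : Subgroup G) ^ 3) := by
  classical
  obtain ⟨hk2, hkv⟩ := hnt
  set H := MulAction.stabilizer G α with hHdef
  have hvk : k + 2 ≤ v := by omega
  -- counting identity: lam * (v-1) = k * (k-1)
  have hcount : lam * (v - 1) = k * (k - 1) := by
    have hswap : ∑ b ∈ D.blocks.filter (fun b => α ∈ b),
          ((Finset.univ.erase α).filter (fun q => q ∈ b)).card
        = ∑ q ∈ Finset.univ.erase α,
          ((D.blocks.filter fun b => α ∈ b).filter (fun b => q ∈ b)).card := by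
      simp_rw [Finset.card_filter]
      exact Finset.sum_comm
    have hL : ∑ b ∈ D.blocks.filter (fun b => α ∈ b),
        ((Finset.univ.erase α).filter (fun q => q ∈ b)).card = k * (k - 1) := by
      rw [Finset.sum_congr rfl (fun b hb => ?_), Finset.sum_const, smul_eq_mul,
        D.point_count α]
      rw [Finset.mem_filter] at hb
      have hbe : (Finset.univ.erase α).filter (fun q => q ∈ b) = b.erase α := by
        ext q
        simp [Finset.mem_erase, and_comm]
      rw [hbe, Finset.card_erase_of_mem hb.2, D.block_size b hb.1]
    have hR : ∑ q ∈ Finset.univ.erase α,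
        ((D.blocks.filter fun b => α ∈ b).filter (fun b => q ∈ b)).card
        = (v - 1) * lam := by
      rw [Finset.sum_congr rfl (fun q hq => ?_), Finset.sum_const, smul_eq_mul,
        Finset.card_erase_of_mem (Finset.mem_univ α), Finset.card_univ, D.card_points]
      rw [Finset.mem_erase] at hq
      rw [Finset.filter_filter]
      exact D.pair_count α q (Ne.symm hq.1)
    rw [hL, hR] at hswap
    rw [mul_comm]
    exact hswap.symm
  have hlam1 : 1 ≤ lam := by
    rcases Nat.eq_zero_or_pos lam with h0 | h
    · rw [h0, zero_mul] at hcount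
      have : k * (k - 1) ≥ 3 * 2 := Nat.mul_le_mul (by omega) (by omega)
      omega
    · exact h
  have hlamk : lam < k := by
    by_contra hge
    push_neg at hge
    have h1 : k * (v - 1) ≤ lam * (v - 1) := Nat.mul_le_mul_right _ hge
    have h2 : k * (k - 1) < k * (v - 1) :=
      Nat.mul_lt_mul_of_le_of_lt (le_refl k) (by omega) (by omega)
    omega
  have hlamv : lam * v < k * k := by
    have h1 : lam * v = lam * (v - 1) + lam := by
      rw [← Nat.mul_succ]
      congr 1
      omega
    have h2 : k * k = k * (k - 1) + k := by
      rw [← Nat.mul_succ]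
      congr 1
      omega
    omega
  -- transitivity on points
  have hblock : ∀ p : P, ∃ b ∈ D.blocks, p ∈ b := by
    intro p
    have : (D.blocks.filter fun b => p ∈ b).Nonempty := by
      rw [← Finset.card_pos, D.point_count]
      omega
    obtain ⟨b, hb⟩ := this
    rw [Finset.mem_filter] at hb
    exact ⟨b, hb.1, hb.2⟩
  have horbit : MulAction.orbit G α = Set.univ := by
    ext p
    simp only [Set.mem_univ, iff_true]
    obtain ⟨b₁, hb₁, hαb₁⟩ := hblock α
    obtain ⟨b₂, hb₂, hpb₂⟩ := hblock p
    obtain ⟨g, hg, hgp, -⟩ := hFlag α p b₁ b₂ hb₁ hb₂ hαb₁ hpb₂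
    exact ⟨⟨g, hg⟩, hgp⟩
  -- orbit-stabilizer
  have hos : Nat.card (MulAction.orbit G α) * Nat.card H = Nat.card G := by
    have := Nat.card_congr (MulAction.orbitProdStabilizerEquivGroup G α)
    rwa [Nat.card_prod] at this
  have horbcard : Nat.card (MulAction.orbit G α) = v := by
    rw [horbit]
    rw [Nat.card_congr (Equiv.Set.univ P), Nat.card_eq_fintype_card, D.card_points]
  have hGcard : Nat.card G = v * Nat.card H := by rw [← hos, horbcard]
  -- k ≤ |H|
  have hkH : k ≤ Nat.card H := by
    obtain ⟨b₀, hb₀, hαb₀⟩ := hblock α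
    set F := D.blocks.filter (fun b => α ∈ b) with hF
    have hmem : ∀ g : H, b₀.image ((g : G) : Equiv.Perm P) ∈ F := by
      intro g
      rw [hF, Finset.mem_filter]
      refine ⟨hAut (g : G) (g : G).2 b₀ hb₀, ?_⟩
      refine Finset.mem_image.mpr ⟨α, hαb₀, ?_⟩
      exact g.2
    have hsurj : Function.Surjective
        (fun g : H => (⟨b₀.image ((g : G) : Equiv.Perm P), hmem g⟩ : {b // b ∈ F})) := by
      rintro ⟨b, hb⟩
      rw [hF, Finset.mem_filter] at hb
      obtain ⟨g, hg, hgα, hgb⟩ := hFlag α α b₀ b hb₀ hb.1 hαb₀ hb.2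
      refine ⟨⟨⟨g, hg⟩, ?_⟩, ?_⟩
      · exact hgα
      · exact Subtype.ext hgb
    have := Nat.card_le_card_of_surjective _ hsurj
    rwa [Nat.card_eq_fintype_card (α := {b // b ∈ F}), Fintype.card_coe, hF,
      D.point_count α] at this
  have hHpos : 0 < Nat.card H := Nat.card_pos
  have hGpos : 0 < Nat.card G := Nat.card_pos
  have part1 : lam * Nat.card G < Nat.card H ^ 3 := by
    calc lam * Nat.card G = (lam * v) * Nat.card H := by rw [hGcard]; ring
      _ < (k * k) * Nat.card H := by
          exact Nat.mul_lt_mul_of_lt_of_le hlamv (le_refl _) hHpos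
      _ ≤ (Nat.card H * Nat.card H) * Nat.card H :=
          Nat.mul_le_mul_right _ (Nat.mul_le_mul hkH hkH)
      _ = Nat.card H ^ 3 := by ring
  have part1' : Nat.card G ≤ Nat.card H ^ 3 := by
    calc Nat.card G = 1 * Nat.card G := (one_mul _).symm
      _ ≤ lam * Nat.card G := Nat.mul_le_mul_right _ hlam1
      _ ≤ Nat.card H ^ 3 := le_of_lt part1
  refine ⟨⟨part1, part1'⟩, ?_⟩
  intro X hnorm _ _ hcent hcoatom hnle
  haveI := hnorm
  -- H ⊔ X = ⊤
  have hsup : H ⊔ X = ⊤ := by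
    apply hcoatom.2
    refine lt_of_le_of_ne le_sup_left ?_
    intro h
    apply hnle
    rw [h]
    exact le_sup_right
  -- product formula: |H| * |X| = |H ⊓ X| * |G|
  have key : Nat.card H * Nat.card X = Nat.card (H ⊓ X : Subgroup G) * Nat.card G := by
    have hXinf : (X ⊓ H).subgroupOf H = X.subgroupOf H := Subgroup.inf_subgroupOf_right X H
    have e1 : Nat.card ((X ⊓ H).subgroupOf H) = Nat.card (X ⊓ H : Subgroup G) :=
      Nat.card_congr (Subgroup.subgroupOfEquivOfLe (inf_le_right : X ⊓ H ≤ H)).toEquiv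
    have e2 : Nat.card ((X ⊓ H).subgroupOf H) * ((X ⊓ H).relIndex H) = Nat.card H :=
      Subgroup.card_mul_index _
    have e3 : (X ⊓ H).relIndex H = X.index := by
      rw [Subgroup.inf_relIndex_right, ← Subgroup.relIndex_sup_right H X, hsup,
        Subgroup.relIndex_top_right]
    have e4 : Nat.card X * X.index = Nat.card G := Subgroup.card_mul_index X
    have e5 : (H ⊓ X : Subgroup G) = (X ⊓ H : Subgroup G) := inf_comm H X
    rw [e5, ← e1, ← e4, ← e2, e3]
    ring
  -- |G| ≤ |X| * outCard X
  have hfinX : Finite X := inferInstance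
  have hfinAut : Finite (MulAut X) :=
    Finite.of_injective (fun f : MulAut X => f.toEquiv) MulEquiv.toEquiv_injective
  have hker : (MulAut.conjNormal : G →* MulAut X).ker = ⊥ := by
    rw [eq_bot_iff, ← hcent]
    intro g hg
    rw [Subgroup.mem_centralizer_iff]
    intro x hx
    have hfix : ((MulAut.conjNormal g : MulAut X) ⟨x, hx⟩ : G) = (⟨x, hx⟩ : X) := by
      rw [MonoidHom.mem_ker] at hg
      rw [hg]
      rfl
    rw [MulAut.conjNormal_apply] at hfix
    have : g * x * g⁻¹ = x := hfix
    calc x * g = (g * x * g⁻¹) * g := by rw [this]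
      _ = g * x := by group
  have hinj : Function.Injective (MulAut.conjNormal : G →* MulAut X) :=
    (MulAut.conjNormal : G →* MulAut X).ker_eq_bot_iff.mp hker
  have hGAut : Nat.card G ≤ Nat.card (MulAut X) :=
    Nat.card_le_card_of_injective _ hinj
  have hAutcard : Nat.card (MulAut X) =
      outCard X * Nat.card (MulAut.conj : X →* MulAut X).range := by
    rw [outCard]
    exact Subgroup.card_eq_card_quotient_mul_card_subgroup _
  have hrange : Nat.card (MulAut.conj : X →* MulAut X).range ≤ Nat.card X :=
    Nat.card_le_card_of_surjective _ (MulAut.conj : X →* MulAut X).rangeRestrict_surjective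
  have hGXo : Nat.card G ≤ Nat.card X * outCard X := by
    calc Nat.card G ≤ Nat.card (MulAut X) := hGAut
      _ = outCard X * Nat.card (MulAut.conj : X →* MulAut X).range := hAutcard
      _ ≤ outCard X * Nat.card X := Nat.mul_le_mul_left _ hrange
      _ = Nat.card X * outCard X := mul_comm _ _
  -- final arithmetic
  have hXpos : 0 < Nat.card X := Nat.card_pos
  have hGlt : Nat.card G < Nat.card H ^ 3 := lt_of_le_of_lt
    (by calc Nat.card G = 1 * Nat.card G := (one_mul _).symm
          _ ≤ lam * Nat.card G := Nat.mul_le_mul_right _ hlam1) part1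
  set g := Nat.card G
  set x := Nat.card X
  set m := Nat.card (H ⊓ X : Subgroup G)
  set o := outCard X
  set hh := Nat.card H
  have s1 : x ^ 3 < m ^ 3 * g ^ 2 := by
    apply Nat.lt_of_mul_lt_mul_left (a := g)
    calc g * x ^ 3 < hh ^ 3 * x ^ 3 :=
          Nat.mul_lt_mul_of_lt_of_le hGlt (le_refl _) (pow_pos hXpos 3)
      _ = (hh * x) ^ 3 := (mul_pow hh x 3).symm
      _ = (m * g) ^ 3 := by rw [key]
      _ = g * (m ^ 3 * g ^ 2) := by ring
  apply Nat.lt_of_mul_lt_mul_left (a := x ^ 2)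
  calc x ^ 2 * x = x ^ 3 := by ring
    _ < m ^ 3 * g ^ 2 := s1
    _ ≤ m ^ 3 * (x * o) ^ 2 := Nat.mul_le_mul_left _ (Nat.pow_le_pow_left hGXo 2)
    _ = x ^ 2 * (o ^ 2 * m ^ 3) := by ring
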